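/- Bistable dynamics: for the payoff matrix B = !![1, 0; 0, θ] with θ > 0, let y : ℝ → Fin 2 → ℝ be differentiable, solve the classical replicator equation ẏ_s = y_s((B y)_s − yᵀ B y) for t ≥ 0, and satisfy y(0) ∈ Δ_2 with 0 < y(0) 0 < 1. Then: (i) if y(0) 0 > θ/(1+θ), then y(t) 0 → 1 as t → ∞; (ii) if y(0) 0 < θ/(1+θ), then y(t) 0 → 0 as t → ∞; (iii) if y(0) 0 = θ/(1+θ), then y(t) 0 = θ/(1+θ) for all t ≥ 0. (On Δ_2 the first component satisfies ẏ_0 = y_0 (1 − y_0)((1+θ) y_0 − θ).) -/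

import Mathlib

open Finset Filter

lemma lin_ode (h c : ℝ → ℝ) (hh : Differentiable ℝ h) (hc : Continuous c)
    (hode : ∀ t, 0 ≤ t → deriv h t = c t * h t) (t : ℝ) (ht : 0 ≤ t) :
    h t = h 0 * Real.exp (∫ s in (0:ℝ)..t, c s) := by
  set C : ℝ → ℝ := fun u => ∫ s in (0:ℝ)..u, c s with hCdef
  have hCd : ∀ u : ℝ, HasDerivAt C (c u) u := fun u =>
    (hc.integral_hasStrictDerivAt 0 u).hasDerivAt
  have hCdiff : Differentiable ℝ C := fun u => (hCd u).differentiableAt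
  set φ : ℝ → ℝ := fun u => h u * Real.exp (-(C u)) with hφdef
  have hφd : ∀ u : ℝ, 0 ≤ u → HasDerivAt φ 0 u := by
    intro u hu
    have h1 : HasDerivAt (fun v => Real.exp (-(C v))) (Real.exp (-(C u)) * (-(c u))) u := by
      have := ((hCd u).neg).exp
      simpa [mul_comm] using this
    have h2 := ((hh u).hasDerivAt.mul h1)
    have h3 : deriv h u * Real.exp (-(C u)) + h u * (Real.exp (-(C u)) * -c u) = 0 := by
      rw [hode u hu]; ring
    rw [h3] at h2; exact h2
  have key : φ t = φ 0 := by
    have hcont : ContinuousOn φ (Set.Icc 0 t) :=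
      (hh.continuous.mul (Real.continuous_exp.comp hCdiff.continuous.neg)).continuousOn
    exact constant_of_has_deriv_right_zero hcont
      (fun x hx => ((hφd x hx.1).hasDerivWithinAt)) t (Set.mem_Icc.mpr ⟨ht, le_refl t⟩)
  have hC0 : C 0 = 0 := intervalIntegral.integral_same
  have := key
  simp only [hφdef, hC0, neg_zero, Real.exp_zero, mul_one] at this
  rw [← this, mul_assoc, ← Real.exp_add]
  rw [show -C t + ∫ (s : ℝ) in (0:ℝ)..t, c s = 0 from neg_add_cancel (C t), Real.exp_zero, mul_one]

lemma lin_ode_pos (h c : ℝ → ℝ) (hh : Differentiable ℝ h) (hc : Continuous c)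
    (hode : ∀ t, 0 ≤ t → deriv h t = c t * h t) (h0 : 0 < h 0) (t : ℝ) (ht : 0 ≤ t) :
    0 < h t := by
  rw [lin_ode h c hh hc hode t ht]; positivity

lemma lin_ode_zero (h c : ℝ → ℝ) (hh : Differentiable ℝ h) (hc : Continuous c)
    (hode : ∀ t, 0 ≤ t → deriv h t = c t * h t) (h0 : h 0 = 0) (t : ℝ) (ht : 0 ≤ t) :
    h t = 0 := by
  rw [lin_ode h c hh hc hode t ht, h0, zero_mul]

/-- Bilinear payoff form `zᵀ B w`. -/
def quadForm (B : Matrix (Fin 2) (Fin 2) ℝ) (z w : Fin 2 → ℝ) : ℝ :=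
  ∑ s, ∑ r, z s * B s r * w r

/-- Membership in the 2-simplex. -/
def inSimplex2 (z : Fin 2 → ℝ) : Prop :=
  0 ≤ z 0 ∧ 0 ≤ z 1 ∧ z 0 + z 1 = 1

theorem bistable_dynamics (θ : ℝ) (hθ : 0 < θ)
    (y : ℝ → Fin 2 → ℝ)
    (hdiff : ∀ s, Differentiable ℝ (fun t => y t s))
    (hode : ∀ t : ℝ, 0 ≤ t → ∀ s : Fin 2,
      deriv (fun τ => y τ s) t =
        y t s * ((∑ r, (!![1, 0; 0, θ] : Matrix (Fin 2) (Fin 2) ℝ) s r * y t r) -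
          ∑ s', ∑ r, y t s' * (!![1, 0; 0, θ] : Matrix (Fin 2) (Fin 2) ℝ) s' r * y t r))
    (hinit : inSimplex2 (y 0))
    (h0 : 0 < y 0 0) (h1 : y 0 0 < 1) :
    (y 0 0 > θ / (1 + θ) →
      Tendsto (fun t => y t 0) atTop (nhds 1)) ∧
    (y 0 0 < θ / (1 + θ) →
      Tendsto (fun t => y t 0) atTop (nhds 0)) ∧
    (y 0 0 = θ / (1 + θ) →
      ∀ t : ℝ, 0 ≤ t → y t 0 = θ / (1 + θ)) := by
  set f : ℝ → ℝ := fun t => y t 0 with hfdef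
  set g : ℝ → ℝ := fun t => y t 1 with hgdef
  have hfd : Differentiable ℝ f := hdiff 0
  have hgd : Differentiable ℝ g := hdiff 1
  have hfc : Continuous f := hfd.continuous
  have hgc : Continuous g := hgd.continuous
  have hθ1 : (0:ℝ) < 1 + θ := by linarith
  -- simplify the ODE
  have hf' : ∀ t, 0 ≤ t → deriv f t = f t * (f t - (f t ^ 2 + θ * g t ^ 2)) := by
    intro t ht
    have := hode t ht 0
    simp only [Fin.sum_univ_two, Matrix.cons_val', Matrix.cons_val_zero, Matrix.cons_val_one,
      Matrix.head_cons, Matrix.head_fin_const, Matrix.empty_val', Matrix.cons_val_fin_one,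
      Matrix.of_apply] at this
    rw [this]; ring
  have hg' : ∀ t, 0 ≤ t → deriv g t = g t * (θ * g t - (f t ^ 2 + θ * g t ^ 2)) := by
    intro t ht
    have := hode t ht 1
    simp only [Fin.sum_univ_two, Matrix.cons_val', Matrix.cons_val_zero, Matrix.cons_val_one,
      Matrix.head_cons, Matrix.head_fin_const, Matrix.empty_val', Matrix.cons_val_fin_one,
      Matrix.of_apply] at this
    rw [this]; ring
  -- the sum stays 1
  have hsum : ∀ t, 0 ≤ t → f t + g t = 1 := by
    intro t ht
    have key := lin_ode_zero (fun u => 1 - (f u + g u)) (fun u => -(f u ^ 2 + θ * g u ^ 2))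
      (by fun_prop)
      (by fun_prop)
      (fun u hu => by
        have hd : deriv (fun v => 1 - (f v + g v)) u = -(deriv f u + deriv g u) := by
          rw [deriv_const_sub, deriv_fun_add (hfd u) (hgd u)]
        rw [hd, hf' u hu, hg' u hu]; ring)
      (by rw [show f 0 + g 0 = 1 from hinit.2.2]; ring) t ht
    linarith
  -- positivity of f and g
  have hfpos : ∀ t, 0 ≤ t → 0 < f t :=
    lin_ode_pos f (fun u => f u - (f u ^ 2 + θ * g u ^ 2)) hfd (by fun_prop)
      (fun u hu => by rw [hf' u hu]; ring) h0
  have hgpos : ∀ t, 0 ≤ t → 0 < g t :=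
    lin_ode_pos g (fun u => θ * g u - (f u ^ 2 + θ * g u ^ 2)) hgd (by fun_prop)
      (fun u hu => by rw [hg' u hu]; ring)
      (by have := hinit.2.2; simp only [hgdef]; linarith)
  have hflt1 : ∀ t, 0 ≤ t → f t < 1 := fun t ht => by
    have := hgpos t ht; have := hsum t ht; linarith
  set β : ℝ := θ / (1 + θ) with hβdef
  have hβθ : β * (1 + θ) = θ := by rw [hβdef]; field_simp
  have hβpos : 0 < β := by positivity
  have hβlt1 : β < 1 := by rw [hβdef, div_lt_one hθ1]; linarith
  have hf00 : 0 < f 0 := h0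
  have hf01 : f 0 < 1 := h1
  -- factored derivative
  have hderiv : ∀ t, 0 ≤ t → deriv f t = ((1 + θ) * (f t * (1 - f t))) * (f t - β) := by
    intro t ht
    have hg1 : g t = 1 - f t := by have := hsum t ht; linarith
    rw [hf' t ht, hg1]
    linear_combination f t * (1 - f t) * hβθ
  -- sign preservation
  have hw : ∀ t, 0 ≤ t → f t - β =
      (f 0 - β) * Real.exp (∫ s in (0:ℝ)..t, (1 + θ) * (f s * (1 - f s))) := by
    intro t ht
    have := lin_ode (fun u => f u - β) (fun u => (1 + θ) * (f u * (1 - f u)))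
      (by fun_prop) (by fun_prop)
      (fun u hu => by rw [deriv_sub_const, hderiv u hu]) t ht
    exact this
  refine ⟨?_, ?_, ?_⟩
  · -- case (i)
    intro hgt
    have hgt' : β < f 0 := hgt
    have hwpos : ∀ t, 0 ≤ t → β < f t := by
      intro t ht
      have := hw t ht
      nlinarith [Real.exp_pos (∫ s in (0:ℝ)..t, (1 + θ) * (f s * (1 - f s)))]
    have hmono : MonotoneOn f (Set.Ici (0:ℝ)) := by
      apply monotoneOn_of_deriv_nonneg (convex_Ici 0) hfd.continuous.continuousOn
        (hfd.differentiableOn)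
      intro x hx
      rw [interior_Ici] at hx
      have hx0 : (0:ℝ) ≤ x := le_of_lt hx
      rw [hderiv x hx0]
      have h1 := hfpos x hx0; have h2 := hflt1 x hx0; have h3 := hwpos x hx0
      have : 0 ≤ (1 + θ) * (f x * (1 - f x)) :=
        mul_nonneg hθ1.le (mul_nonneg h1.le (by linarith))
      nlinarith
    set F : ℝ → ℝ := fun t => f (max t 0) with hFdef
    have hFmono : Monotone F := fun a b hab =>
      hmono (Set.mem_Ici.mpr (le_max_right a 0)) (Set.mem_Ici.mpr (le_max_right b 0))
        (max_le_max hab le_rfl)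
    have hFbdd : BddAbove (Set.range F) := by
      refine ⟨1, ?_⟩
      rintro x ⟨t, rfl⟩
      exact (hflt1 _ (le_max_right t 0)).le
    set L : ℝ := ⨆ t, F t with hLdef
    have hfle : ∀ t, 0 ≤ t → f t ≤ L := by
      intro t ht
      have h := le_ciSup hFbdd t
      simp only [hFdef] at h
      rwa [max_eq_left ht] at h
    have htendf : Tendsto f atTop (nhds L) := by
      refine (tendsto_atTop_ciSup hFmono hFbdd).congr' ?_
      filter_upwards [eventually_ge_atTop (0:ℝ)] with t ht
      rw [hFdef]; simp [max_eq_left ht]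
    have hL1 : L ≤ 1 := ciSup_le fun t => (hflt1 _ (le_max_right t 0)).le
    have hf0le : ∀ t, 0 ≤ t → f 0 ≤ f t := fun t ht =>
      hmono Set.self_mem_Ici (Set.mem_Ici.mpr ht) ht
    have hLeq : L = 1 := by
      by_contra hne
      have hLlt : L < 1 := lt_of_le_of_ne hL1 hne
      have hf0L : f 0 ≤ L := hfle 0 le_rfl
      set δ : ℝ := ((1 + θ) * (f 0 * (1 - L))) * (f 0 - β) with hδdef
      have hδpos : 0 < δ := by
        have h1 : 0 < 1 - L := by linarith
        have h2 : 0 < f 0 - β := by linarith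
        exact mul_pos (mul_pos hθ1 (mul_pos hf00 h1)) h2
      have hdlb : ∀ t, 0 ≤ t → δ ≤ deriv f t := by
        intro t ht
        rw [hderiv t ht]
        have h1 : f 0 ≤ f t := hf0le t ht
        have h2 : f t ≤ L := hfle t ht
        have h3 : 0 < f t := hfpos t ht
        have h4 : β < f t := hwpos t ht
        have ha : f 0 * (1 - L) ≤ f t * (1 - f t) :=
          mul_le_mul h1 (by linarith) (by linarith) h3.le
        have hb : f 0 - β ≤ f t - β := by linarith
        have hc : (f 0 * (1 - L)) * (f 0 - β) ≤ (f t * (1 - f t)) * (f t - β) :=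
          mul_le_mul ha hb (by linarith) (by nlinarith)
        rw [hδdef]
        have hd := mul_le_mul_of_nonneg_left hc hθ1.le
        linarith [hd]
      have hgrow : ∀ t, 0 ≤ t → f 0 + δ * t ≤ f t := by
        intro t ht
        have hmono2 : MonotoneOn (fun u => f u - δ * u) (Set.Ici (0:ℝ)) := by
          apply monotoneOn_of_deriv_nonneg (convex_Ici 0)
            (Continuous.continuousOn (by fun_prop))
            (Differentiable.differentiableOn (by fun_prop))
          intro x hx
          rw [interior_Ici] at hx
          have hdx : deriv (fun u => f u - δ * u) x = deriv f x - δ := by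
            have := ((hfd x).hasDerivAt.sub ((hasDerivAt_id x).const_mul δ)).deriv
            simp only [id, mul_one] at this; exact this
          rw [hdx]
          have := hdlb x (le_of_lt hx); linarith
        have := hmono2 Set.self_mem_Ici (Set.mem_Ici.mpr ht) ht
        simp only at this; linarith
      set T : ℝ := (L + 1 - f 0) / δ with hTdef
      have hT0 : 0 ≤ T := div_nonneg (by linarith) hδpos.le
      have hg1 := hgrow T hT0
      have hfT : f T ≤ L := hfle T hT0
      have hδT : δ * T = L + 1 - f 0 := by
        rw [hTdef]; field_simp
      linarith
    rw [← hLeq]; exact htendf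
  · -- case (ii)
    intro hlt
    have hlt' : f 0 < β := hlt
    have hwneg : ∀ t, 0 ≤ t → f t < β := by
      intro t ht
      have := hw t ht
      nlinarith [Real.exp_pos (∫ s in (0:ℝ)..t, (1 + θ) * (f s * (1 - f s)))]
    have hanti : AntitoneOn f (Set.Ici (0:ℝ)) := by
      apply antitoneOn_of_deriv_nonpos (convex_Ici 0) hfd.continuous.continuousOn
        (hfd.differentiableOn)
      intro x hx
      rw [interior_Ici] at hx
      have hx0 : (0:ℝ) ≤ x := le_of_lt hx
      rw [hderiv x hx0]
      have h1 := hfpos x hx0; have h2 := hflt1 x hx0; have h3 := hwneg x hx0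
      have hnn : 0 ≤ (1 + θ) * (f x * (1 - f x)) :=
        mul_nonneg hθ1.le (mul_nonneg h1.le (by linarith))
      nlinarith
    set F : ℝ → ℝ := fun t => f (max t 0) with hFdef
    have hFanti : Antitone F := fun a b hab =>
      hanti (Set.mem_Ici.mpr (le_max_right a 0)) (Set.mem_Ici.mpr (le_max_right b 0))
        (max_le_max hab le_rfl)
    have hFbdd : BddBelow (Set.range F) := by
      refine ⟨0, ?_⟩
      rintro x ⟨t, rfl⟩
      exact (hfpos _ (le_max_right t 0)).le
    set N : ℝ := ⨅ t, F t with hNdef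
    have hfge : ∀ t, 0 ≤ t → N ≤ f t := by
      intro t ht
      have h := ciInf_le hFbdd t
      simp only [hFdef] at h
      rwa [max_eq_left ht] at h
    have htendf : Tendsto f atTop (nhds N) := by
      refine (tendsto_atTop_ciInf hFanti hFbdd).congr' ?_
      filter_upwards [eventually_ge_atTop (0:ℝ)] with t ht
      rw [hFdef]; simp [max_eq_left ht]
    have hN0 : 0 ≤ N := le_ciInf fun t => (hfpos _ (le_max_right t 0)).le
    have hfle0 : ∀ t, 0 ≤ t → f t ≤ f 0 := fun t ht =>
      hanti Set.self_mem_Ici (Set.mem_Ici.mpr ht) ht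
    have hNeq : N = 0 := by
      by_contra hne
      have hNpos : 0 < N := lt_of_le_of_ne hN0 (Ne.symm hne)
      set δ : ℝ := ((1 + θ) * (N * (1 - f 0))) * (β - f 0) with hδdef
      have hδpos : 0 < δ :=
        mul_pos (mul_pos hθ1 (mul_pos hNpos (by linarith))) (by linarith)
      have hdub : ∀ t, 0 ≤ t → deriv f t ≤ -δ := by
        intro t ht
        rw [hderiv t ht]
        have h1 := hfge t ht
        have h2 := hfle0 t ht
        have h3 := hfpos t ht
        have h4 := hwneg t ht
        have h5 := hflt1 t ht
        have ha : N * (1 - f 0) ≤ f t * (1 - f t) :=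
          mul_le_mul h1 (by linarith) (by linarith) h3.le
        have hb : f t - β ≤ -(β - f 0) := by linarith
        have key : (f t * (1 - f t)) * (f t - β) ≤ (N * (1 - f 0)) * (-(β - f 0)) := by
          calc (f t * (1 - f t)) * (f t - β)
              ≤ (f t * (1 - f t)) * (-(β - f 0)) :=
                mul_le_mul_of_nonneg_left hb (mul_nonneg h3.le (by linarith))
            _ ≤ (N * (1 - f 0)) * (-(β - f 0)) :=
                mul_le_mul_of_nonpos_right ha (by linarith)
        have hk := mul_le_mul_of_nonneg_left key hθ1.le
        rw [hδdef]; nlinarith [hk]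
      have hshrink : ∀ t, 0 ≤ t → f t ≤ f 0 - δ * t := by
        intro t ht
        have hanti2 : AntitoneOn (fun u => f u + δ * u) (Set.Ici (0:ℝ)) := by
          apply antitoneOn_of_deriv_nonpos (convex_Ici 0)
            (Continuous.continuousOn (by fun_prop))
            (Differentiable.differentiableOn (by fun_prop))
          intro x hx
          rw [interior_Ici] at hx
          have hdx : deriv (fun u => f u + δ * u) x = deriv f x + δ := by
            have := ((hfd x).hasDerivAt.add ((hasDerivAt_id x).const_mul δ)).deriv
            simp only [id, mul_one] at this; exact this
          rw [hdx]
          have := hdub x (le_of_lt hx); linarith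
        have := hanti2 Set.self_mem_Ici (Set.mem_Ici.mpr ht) ht
        simp only at this; linarith
      set T : ℝ := (f 0 - N + 1) / δ with hTdef
      have hT0 : 0 ≤ T := div_nonneg (by linarith [hfge 0 le_rfl]) hδpos.le
      have hs := hshrink T hT0
      have hgeT := hfge T hT0
      have hδT : δ * T = f 0 - N + 1 := by
        rw [hTdef]; field_simp
      linarith
    rw [← hNeq]; exact htendf
  · -- case (iii)
    intro heq t ht
    have := hw t ht
    have hz : f 0 - β = 0 := by rw [hβdef] at heq ⊢; simp [hfdef, heq]
    rw [hz, zero_mul] at this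
    have : f t = β := by linarith
    simpa [hβdef] using this
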